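/- arXiv:2312.15774 — 2 statements merged into one kernel-verified Lean document; each statement's English description precedes it below -/
import Mathlib

section
/- Let p, q ∈ ℝ be arbitrary. Let X and Y be two distinct random variables from the family {T_{k,l} : 1 ≤ k < l ≤ n} ∪ {T_k : 1 ≤ k ≤ n} ∪ {S_k : 1 ≤ k ≤ n} ∪ {T, S}. If {X, Y} is not equal to {S_k, T_k} for any k ≤ n and not equal to {S, T}, then ν(XY) = 0. -/
open MeasureTheory ProbabilityTheory Finset

namespace GS

noncomputable section

/-- Spin values `{-S, …, S}`, encoded by `Fin (2S+1)`. -/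
def spinVal (S : ℕ) (s : Fin (2 * S + 1)) : ℝ := (s : ℝ) - (S : ℝ)

/-- Configurations: `Σ_{N,S} = {0, ±1, …, ±S}^N`. -/
abbrev Config (N S : ℕ) := Fin N → Fin (2 * S + 1)

/-- Disorder: the couplings `g i j` together with the auxiliary cavity Gaussian `η`. -/
abbrev Disorder (N : ℕ) := (Fin N → Fin N → ℝ) × ℝ

/-- The law of the disorder: i.i.d. standard Gaussians. -/
def disorderLaw (N : ℕ) : Measure (Disorder N) :=
  (Measure.pi fun _ : Fin N => Measure.pi fun _ : Fin N => gaussianReal 0 1).prod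
    (gaussianReal 0 1)

/-- Ghatak–Sherrington Hamiltonian. -/
def Ham (N S : ℕ) (β h D : ℝ) (ω : Disorder N) (σ : Config N S) : ℝ :=
  β / Real.sqrt N *
      ∑ i : Fin N, ∑ j : Fin N,
        (if i < j then ω.1 i j * spinVal S (σ i) * spinVal S (σ j) else 0)
    + D * ∑ i : Fin N, spinVal S (σ i) ^ 2
    + h * ∑ i : Fin N, spinVal S (σ i)

/-- The last spin of a configuration. -/
def lastSpin (N S : ℕ) (σ : Config N S) : ℝ :=
  if hN : 0 < N then spinVal S (σ ⟨N - 1, Nat.sub_lt hN Nat.one_pos⟩) else 0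

/-- Interpolated cavity Hamiltonian `H_N^t`. -/
def HamT (N S : ℕ) (β h D p q t : ℝ) (ω : Disorder N) (σ : Config N S) : ℝ :=
  if hN : 0 < N then
    let last : Fin N := ⟨N - 1, Nat.sub_lt hN Nat.one_pos⟩
    (β / Real.sqrt N *
        ∑ i : Fin N, ∑ j : Fin N,
          (if i < j ∧ j ≠ last then ω.1 i j * spinVal S (σ i) * spinVal S (σ j) else 0)
      + D * ∑ i : Fin N, (if i ≠ last then spinVal S (σ i) ^ 2 else 0)
      + h * ∑ i : Fin N, (if i ≠ last then spinVal S (σ i) else 0))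
    + spinVal S (σ last) *
        (Real.sqrt t * (β / Real.sqrt N) *
            ∑ i : Fin N, (if i ≠ last then ω.1 i last * spinVal S (σ i) else 0)
          + Real.sqrt (1 - t) * β * ω.2 * Real.sqrt q)
    + (1 - t) * (β ^ 2 / 2) * (p - q) * spinVal S (σ last) ^ 2
    + D * spinVal S (σ last) ^ 2 + h * spinVal S (σ last)
  else 0

/-- Gibbs average `⟨f⟩` of a function of `n` replicas, for a fixed Hamiltonian. -/
def gibbsAvg {N S : ℕ} (E : Config N S → ℝ) {n : ℕ}
    (f : (Fin n → Config N S) → ℝ) : ℝ :=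
  (∑ σ : Fin n → Config N S, f σ * ∏ k : Fin n, Real.exp (E (σ k))) /
    (∑ σ : Config N S, Real.exp (E σ)) ^ n

/-- `ν(f) = E⟨f⟩`; the function may also depend on the disorder. -/
def nu (N S n : ℕ) (β h D : ℝ)
    (f : Disorder N → (Fin n → Config N S) → ℝ) : ℝ :=
  ∫ ω, gibbsAvg (Ham N S β h D ω) (f ω) ∂(disorderLaw N)

/-- `ν_t(f)` along the cavity interpolation. -/
def nuT (N S n : ℕ) (β h D p q t : ℝ)
    (f : Disorder N → (Fin n → Config N S) → ℝ) : ℝ :=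
  ∫ ω, gibbsAvg (HamT N S β h D p q t ω) (f ω) ∂(disorderLaw N)

/-- `ν_0(f)`. -/
def nu0 (N S n : ℕ) (β h D p q : ℝ)
    (f : Disorder N → (Fin n → Config N S) → ℝ) : ℝ :=
  nuT N S n β h D p q 0 f

/-- `ν_0'(f)`, the derivative of `t ↦ ν_t(f)` at `t = 0`. -/
def nu0' (N S n : ℕ) (β h D p q : ℝ)
    (f : Disorder N → (Fin n → Config N S) → ℝ) : ℝ :=
  deriv (fun t => nuT N S n β h D p q t f) 0

/-- Overlap `R_{k,l}` of replicas `k, l`. -/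
def overlap (N S : ℕ) {n : ℕ} (σ : Fin n → Config N S) (k l : Fin n) : ℝ :=
  (1 / (N : ℝ)) * ∑ i : Fin N, spinVal S (σ k i) * spinVal S (σ l i)

/-- Overlap without the last-spin contribution, `R⁻_{k,l}`. -/
def overlapMinus (N S : ℕ) {n : ℕ} (σ : Fin n → Config N S) (k l : Fin n) : ℝ :=
  overlap N S σ k l - lastSpin N S (σ k) * lastSpin N S (σ l) / N

/-- `Q_{k,l}`: `p` on the diagonal, `q` off the diagonal. -/
def Qc (p q : ℝ) {n : ℕ} (k l : Fin n) : ℝ := if k = l then p else q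

/-- The high-temperature moment bounds for `(p, q)`. -/
def HighTempBounds (S n : ℕ) (β h D p q : ℝ) : Prop :=
  ∃ C > 0, ∀ N : ℕ, 2 ≤ N → ∀ j : ℕ, 1 ≤ j → ∀ k l : Fin n,
    nu N S n β h D (fun _ σ => (overlap N S σ k l - Qc p q k l) ^ (2 * j)) ≤
      (C * j / N) ^ j

/-- Single-site Gibbs average `b_i = ⟨σ_i⟩`. -/
def bAvg (N S : ℕ) (β h D : ℝ) (ω : Disorder N) (i : Fin N) : ℝ :=
  gibbsAvg (Ham N S β h D ω) (n := 1) (fun σ => spinVal S (σ 0 i))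

/-- Single-site Gibbs average `b̃_i = ⟨σ_i²⟩`. -/
def btAvg (N S : ℕ) (β h D : ℝ) (ω : Disorder N) (i : Fin N) : ℝ :=
  gibbsAvg (Ham N S β h D ω) (n := 1) (fun σ => spinVal S (σ 0 i) ^ 2)

/-- Basis variable `T_{k,l}`. -/
def Tkl (N S : ℕ) (β h D : ℝ) (ω : Disorder N) {n : ℕ} (σ : Fin n → Config N S)
    (k l : Fin n) : ℝ :=
  (1 / (N : ℝ)) * ∑ i : Fin N,
    (spinVal S (σ k i) - bAvg N S β h D ω i) * (spinVal S (σ l i) - bAvg N S β h D ω i)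

/-- Basis variable `T_k`. -/
def Tk (N S : ℕ) (β h D : ℝ) (ω : Disorder N) {n : ℕ} (σ : Fin n → Config N S)
    (k : Fin n) : ℝ :=
  (1 / (N : ℝ)) * ∑ i : Fin N,
    (spinVal S (σ k i) - bAvg N S β h D ω i) * bAvg N S β h D ω i

/-- Basis variable `T`. -/
def Tc (N S : ℕ) (β h D q : ℝ) (ω : Disorder N) : ℝ :=
  (1 / (N : ℝ)) * ∑ i : Fin N, bAvg N S β h D ω i ^ 2 - q

/-- Basis variable `S_l`. -/
def Sl (N S : ℕ) (β h D : ℝ) (ω : Disorder N) {n : ℕ} (σ : Fin n → Config N S)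
    (l : Fin n) : ℝ :=
  (1 / (N : ℝ)) * ∑ i : Fin N, (spinVal S (σ l i) ^ 2 - btAvg N S β h D ω i)

/-- Basis variable `S`. -/
def Sc (N S : ℕ) (β h D p : ℝ) (ω : Disorder N) : ℝ :=
  (1 / (N : ℝ)) * ∑ i : Fin N, btAvg N S β h D ω i - p

/-- `A = ν₀((ε₁ − ε₃)(ε₂ − ε₄)·ε₁ε₂)`. -/
def cA (N S : ℕ) (β h D p q : ℝ) : ℝ :=
  nu0 N S 4 β h D p q (fun _ σ =>
    (lastSpin N S (σ 0) - lastSpin N S (σ 2)) * (lastSpin N S (σ 1) - lastSpin N S (σ 3)) *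
      (lastSpin N S (σ 0) * lastSpin N S (σ 1)))

/-- `D̄ = ν₀((ε₁² − ε₂²)·ε₁²)`. -/
def cD (N S : ℕ) (β h D p q : ℝ) : ℝ :=
  nu0 N S 2 β h D p q (fun _ σ =>
    (lastSpin N S (σ 0) ^ 2 - lastSpin N S (σ 1) ^ 2) * lastSpin N S (σ 0) ^ 2)

/-- `F = ν₀((ε₁ε₃ − ε₂ε₃)·ε₁ε₃)`. -/
def cF (N S : ℕ) (β h D p q : ℝ) : ℝ :=
  nu0 N S 3 β h D p q (fun _ σ =>
    (lastSpin N S (σ 0) * lastSpin N S (σ 2) - lastSpin N S (σ 1) * lastSpin N S (σ 2)) *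
      (lastSpin N S (σ 0) * lastSpin N S (σ 2)))

/-- `G = ν₀((ε₁ε₃ − ε₂ε₃)·ε₁ε₄)`. -/
def cG (N S : ℕ) (β h D p q : ℝ) : ℝ :=
  nu0 N S 4 β h D p q (fun _ σ =>
    (lastSpin N S (σ 0) * lastSpin N S (σ 2) - lastSpin N S (σ 1) * lastSpin N S (σ 2)) *
      (lastSpin N S (σ 0) * lastSpin N S (σ 3)))

/-- `E = ν₀((ε₁² − ε₂²)·ε₁ε₃)`. -/
def cE (N S : ℕ) (β h D p q : ℝ) : ℝ :=
  nu0 N S 3 β h D p q (fun _ σ =>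
    (lastSpin N S (σ 0) ^ 2 - lastSpin N S (σ 1) ^ 2) *
      (lastSpin N S (σ 0) * lastSpin N S (σ 2)))

def cM1 (N S : ℕ) (β h D p q : ℝ) : ℝ :=
  1 - β ^ 2 * (cF N S β h D p q - 3 * cG N S β h D p q)

def cM2 (N S : ℕ) (β h D p q : ℝ) : ℝ :=
  1 - β ^ 2 / 2 * cD N S β h D p q

def cM3 (N S : ℕ) (β h D p q : ℝ) : ℝ :=
  1 - β ^ 2 * (cF N S β h D p q - cG N S β h D p q)

def cM (N S : ℕ) (β h D p q : ℝ) : ℝ :=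
  cM1 N S β h D p q * cM2 N S β h D p q + β ^ 4 * cE N S β h D p q ^ 2

/-- `A₂² = A/(N(1 − β²A))`. -/
def cA2 (N S : ℕ) (β h D p q : ℝ) : ℝ :=
  cA N S β h D p q / ((N : ℝ) * (1 - β ^ 2 * cA N S β h D p q))

/-- `A₁² = (1/(2β²N))·(1/M₃ − M₂/M)`. -/
def cA1 (N S : ℕ) (β h D p q : ℝ) : ℝ :=
  1 / (2 * β ^ 2 * (N : ℝ)) * (1 / cM3 N S β h D p q - cM2 N S β h D p q / cM N S β h D p q)

/-- `B₁² = (2/(Nβ²))·(M₁/M − 1)`. -/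
def cB1 (N S : ℕ) (β h D p q : ℝ) : ℝ :=
  2 / ((N : ℝ) * β ^ 2) * (cM1 N S β h D p q / cM N S β h D p q - 1)

/-- `C₁² = E/(NM)`. -/
def cC1 (N S : ℕ) (β h D p q : ℝ) : ℝ :=
  cE N S β h D p q / ((N : ℝ) * cM N S β h D p q)

/-- `I₃ = ν₀(ε₁ε₂ε₃ε₄) − q²`. -/
def cI3 (N S : ℕ) (β h D p q : ℝ) : ℝ :=
  nu0 N S 4 β h D p q (fun _ σ =>
    lastSpin N S (σ 0) * lastSpin N S (σ 1) * lastSpin N S (σ 2) * lastSpin N S (σ 3)) - q ^ 2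

/-- `I₅ = ν₀(ε₁ε₂ε₃²) − pq`. -/
def cI5 (N S : ℕ) (β h D p q : ℝ) : ℝ :=
  nu0 N S 3 β h D p q (fun _ σ =>
    lastSpin N S (σ 0) * lastSpin N S (σ 1) * lastSpin N S (σ 2) ^ 2) - p * q

/-- `K₃ = I₅`. -/
def cK3 (N S : ℕ) (β h D p q : ℝ) : ℝ := cI5 N S β h D p q

/-- `K₄ = ν₀(ε₁²ε₂²) − p²`. -/
def cK4 (N S : ℕ) (β h D p q : ℝ) : ℝ :=
  nu0 N S 2 β h D p q (fun _ σ =>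
    lastSpin N S (σ 0) ^ 2 * lastSpin N S (σ 1) ^ 2) - p ^ 2

/-- `A₀²`. -/
def cA0 (N S : ℕ) (β h D p q : ℝ) : ℝ :=
  β ^ 2 / cM N S β h D p q *
      (β ^ 2 * cE N S β h D p q * cK4 N S β h D p q + cM2 N S β h D p q * cI5 N S β h D p q) *
      cC1 N S β h D p q
    + 2 * β ^ 2 / cM N S β h D p q *
      (β ^ 2 * cE N S β h D p q * (cE N S β h D p q - cK3 N S β h D p q)
        + cM2 N S β h D p q * (2 * cG N S β h D p q - cI3 N S β h D p q)) *
      cA1 N S β h D p q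
    + β ^ 2 / cM N S β h D p q *
      (β ^ 2 * cE N S β h D p q * cK3 N S β h D p q + cM2 N S β h D p q * cI3 N S β h D p q) *
      cA2 N S β h D p q
    + (β ^ 2 * cE N S β h D p q * cK3 N S β h D p q + cM2 N S β h D p q * cI3 N S β h D p q) /
      (cM N S β h D p q * (N : ℝ))

/-- `B₀²`. -/
def cB0 (N S : ℕ) (β h D p q : ℝ) : ℝ :=
  β ^ 2 / (2 * cM N S β h D p q) *
      (cM1 N S β h D p q * cK4 N S β h D p q - β ^ 2 * cE N S β h D p q * cI5 N S β h D p q) *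
      cB1 N S β h D p q
    + β ^ 2 / cM N S β h D p q *
      (cM1 N S β h D p q * (cE N S β h D p q - cK3 N S β h D p q)
        - β ^ 2 * cE N S β h D p q * (2 * cG N S β h D p q - cI3 N S β h D p q)) *
      cC1 N S β h D p q
    + (cM1 N S β h D p q * cK4 N S β h D p q - β ^ 2 * cE N S β h D p q * cI5 N S β h D p q) /
      (cM N S β h D p q * (N : ℝ))

/-- `C₀²`. -/
def cC0 (N S : ℕ) (β h D p q : ℝ) : ℝ :=
  β ^ 2 / cM N S β h D p q *
      (1 / 2 * cM2 N S β h D p q * cI5 N S β h D p q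
        + β ^ 2 * cE N S β h D p q * cK4 N S β h D p q) *
      cB1 N S β h D p q
    + β ^ 2 / cM N S β h D p q *
      (cM2 N S β h D p q * (2 * cG N S β h D p q - cI3 N S β h D p q)
        + β ^ 2 * cE N S β h D p q * (cE N S β h D p q - cK3 N S β h D p q)) *
      cC1 N S β h D p q
    + (cM2 N S β h D p q * cI5 N S β h D p q + β ^ 2 * cE N S β h D p q * cK4 N S β h D p q) /
      (cM N S β h D p q * (N : ℝ))

/-- `X = O_N(r)`: there is a constant `K` independent of `N` with `|X N| ≤ K·N^{-r/2}`. -/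
def BigO (r : ℝ) (X : ℕ → ℝ) : Prop :=
  ∃ K : ℝ, ∀ N : ℕ, 2 ≤ N → |X N| ≤ K * (N : ℝ) ^ (-r / 2)

/-- A centered jointly Gaussian family with covariance `C`: every linear combination is
a centered Gaussian with the prescribed variance. -/
def IsCenteredGaussian {Ω' : Type} [MeasurableSpace Ω'] (P : Measure Ω') {ι : Type}
    [Fintype ι] (X : ι → Ω' → ℝ) (C : ι → ι → ℝ) : Prop :=
  IsProbabilityMeasure P ∧ (∀ i, Measurable (X i)) ∧
    ∀ c : ι → ℝ,
      P.map (fun ω => ∑ i, c i * X i ω) =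
        gaussianReal 0 (Real.toNNReal (∑ i, ∑ j, c i * c j * C i j))

end

/-- Index set for pairs `(k, l)` with `k < l`. -/
abbrev OffDiag (n : ℕ) := {x : Fin n × Fin n // x.1 < x.2}

/-- Index set for the basis random variables `T_{k,l}, T_k, S_k, T, S`. -/
abbrev BasisIdx (n : ℕ) := OffDiag n ⊕ Fin n ⊕ Fin n ⊕ Unit ⊕ Unit

noncomputable section

/-- The basis random variable indexed by `u`. -/
def basisRV (N S : ℕ) (β h D p q : ℝ) {n : ℕ} :
    BasisIdx n → Disorder N → (Fin n → Config N S) → ℝ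
  | Sum.inl u => fun ω σ => Tkl N S β h D ω σ u.1.1 u.1.2
  | Sum.inr (Sum.inl k) => fun ω σ => Tk N S β h D ω σ k
  | Sum.inr (Sum.inr (Sum.inl l)) => fun ω σ => Sl N S β h D ω σ l
  | Sum.inr (Sum.inr (Sum.inr (Sum.inl _))) => fun ω _ => Tc N S β h D q ω
  | Sum.inr (Sum.inr (Sum.inr (Sum.inr _))) => fun ω _ => Sc N S β h D p ω

end

/-- `{X, Y}` is one of the correlated pairs `{T_k, S_k}` or `{T, S}`. -/
def CorrelatedPair {n : ℕ} (u v : BasisIdx n) : Prop :=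
  (∃ k : Fin n,
      (u = Sum.inr (Sum.inl k) ∧ v = Sum.inr (Sum.inr (Sum.inl k))) ∨
      (v = Sum.inr (Sum.inl k) ∧ u = Sum.inr (Sum.inr (Sum.inl k)))) ∨
  (u = Sum.inr (Sum.inr (Sum.inr (Sum.inl ()))) ∧
      v = Sum.inr (Sum.inr (Sum.inr (Sum.inr ())))) ∨
  (v = Sum.inr (Sum.inr (Sum.inr (Sum.inl ()))) ∧
      u = Sum.inr (Sum.inr (Sum.inr (Sum.inr ()))))

section AuxProofs

open Finset

variable {N S n : ℕ}

lemma config_nonempty : Nonempty (Config N S) := ⟨fun _ => ⟨0, by omega⟩⟩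

lemma Z_pos (E : Config N S → ℝ) : 0 < ∑ c : Config N S, Real.exp (E c) := by
  have := config_nonempty (N := N) (S := S)
  exact Finset.sum_pos (fun c _ => Real.exp_pos _) Finset.univ_nonempty

lemma numer_zero (E : Config N S → ℝ) (r : Fin n)
    (F : Config N S → ℝ) (G : (Fin n → Config N S) → ℝ)
    (hF : ∑ c : Config N S, F c * Real.exp (E c) = 0)
    (hG : ∀ σ c, G (Function.update σ r c) = G σ) :
    ∑ σ : Fin n → Config N S, F (σ r) * G σ * ∏ k, Real.exp (E (σ k)) = 0 := by
  classical
  obtain ⟨c₀⟩ := config_nonempty (N := N) (S := S)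
  set e := Equiv.funSplitAt r (Config N S) with he
  have hat : ∀ (c : Config N S) (g : {j : Fin n // j ≠ r} → Config N S),
      e.symm (c, g) r = c :=
    fun c g => congrArg Prod.fst (e.apply_symm_apply (c, g))
  have hoff : ∀ (c : Config N S) (g : {j : Fin n // j ≠ r} → Config N S)
      (j : Fin n) (hj : j ≠ r), e.symm (c, g) j = g ⟨j, hj⟩ :=
    fun c g j hj => congrArg (fun p => p.2 ⟨j, hj⟩) (e.apply_symm_apply (c, g))
  have hupd : ∀ (c : Config N S) (g : {j : Fin n // j ≠ r} → Config N S),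
      e.symm (c, g) = Function.update (e.symm (c₀, g)) r c := by
    intro c g; funext j
    by_cases hj : j = r
    · subst hj; rw [hat, Function.update_self]
    · rw [hoff c g j hj, Function.update_of_ne hj, hoff c₀ g j hj]
  rw [← Equiv.sum_comp e.symm (fun σ => F (σ r) * G σ * ∏ k, Real.exp (E (σ k))),
    Fintype.sum_prod_type]
  have hterm : ∀ (c : Config N S) (g : {j : Fin n // j ≠ r} → Config N S),
      F (e.symm (c, g) r) * G (e.symm (c, g)) * ∏ k, Real.exp (E (e.symm (c, g) k)) =
      (F c * Real.exp (E c)) *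
        (G (e.symm (c₀, g)) * ∏ k ∈ univ.erase r, Real.exp (E (e.symm (c₀, g) k))) := by
    intro c g
    have h2 : G (e.symm (c, g)) = G (e.symm (c₀, g)) := by rw [hupd c g, hG]
    have h3 : ∏ k, Real.exp (E (e.symm (c, g) k)) =
        Real.exp (E c) * ∏ k ∈ univ.erase r, Real.exp (E (e.symm (c₀, g) k)) := by
      rw [← Finset.mul_prod_erase univ _ (mem_univ r), hat]
      congr 1
      refine Finset.prod_congr rfl fun k hk => ?_
      have hkr : k ≠ r := (Finset.mem_erase.1 hk).1
      rw [hoff c g k hkr, ← hoff c₀ g k hkr]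
    rw [hat, h2, h3]; ring
  calc
    ∑ c : Config N S, ∑ g : {j : Fin n // j ≠ r} → Config N S,
        F (e.symm (c, g) r) * G (e.symm (c, g)) * ∏ k, Real.exp (E (e.symm (c, g) k))
      = ∑ c : Config N S, (F c * Real.exp (E c)) *
          ∑ g : {j : Fin n // j ≠ r} → Config N S,
            (G (e.symm (c₀, g)) * ∏ k ∈ univ.erase r, Real.exp (E (e.symm (c₀, g) k))) := by
        refine Finset.sum_congr rfl fun c _ => ?_
        rw [Finset.mul_sum]
        exact Finset.sum_congr rfl fun g _ => hterm c g
    _ = 0 := by rw [← Finset.sum_mul, hF, zero_mul]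

lemma gibbsAvg_zero (E : Config N S → ℝ) (r : Fin n) (F : Config N S → ℝ)
    (G : (Fin n → Config N S) → ℝ)
    (hF : ∑ c : Config N S, F c * Real.exp (E c) = 0)
    (hG : ∀ σ c, G (Function.update σ r c) = G σ) :
    gibbsAvg E (fun σ => F (σ r) * G σ) = 0 := by
  unfold gibbsAvg
  rw [numer_zero E r F G hF hG, zero_div]

lemma gibbsAvg_sum {ι : Type*} (E : Config N S → ℝ) (s : Finset ι)
    (f : ι → (Fin n → Config N S) → ℝ) :
    gibbsAvg E (fun σ => ∑ i ∈ s, f i σ) = ∑ i ∈ s, gibbsAvg E (f i) := by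
  unfold gibbsAvg
  rw [← Finset.sum_div]
  congr 1
  simp_rw [Finset.sum_mul]
  exact Finset.sum_comm

/-- `g` is a sum of terms, each centered in replica `r`. -/
def Centered (E : Config N S → ℝ) (r : Fin n) (g : (Fin n → Config N S) → ℝ) : Prop :=
  ∃ F : Fin N → Config N S → ℝ, ∃ G : Fin N → (Fin n → Config N S) → ℝ,
    (∀ σ, g σ = ∑ i : Fin N, F i (σ r) * G i σ) ∧
    (∀ i, ∑ c : Config N S, F i c * Real.exp (E c) = 0) ∧
    (∀ i σ c, G i (Function.update σ r c) = G i σ)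

/-- `g` does not depend on replica `r`. -/
def IndepOf (r : Fin n) (g : (Fin n → Config N S) → ℝ) : Prop :=
  ∀ σ c, g (Function.update σ r c) = g σ

lemma gibbs_prod_zero (E : Config N S → ℝ) (r : Fin n)
    {g h' : (Fin n → Config N S) → ℝ}
    (hg : Centered E r g) (hh : IndepOf r h') :
    gibbsAvg E (fun σ => g σ * h' σ) = 0 := by
  obtain ⟨F, G, hrep, hF, hG⟩ := hg
  have heq : (fun σ => g σ * h' σ) =
      fun σ => ∑ i : Fin N, F i (σ r) * (G i σ * h' σ) := by
    funext σ
    rw [hrep σ, Finset.sum_mul]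
    exact Finset.sum_congr rfl fun i _ => mul_assoc _ _ _
  rw [heq, gibbsAvg_sum]
  exact Finset.sum_eq_zero fun i _ =>
    gibbsAvg_zero E r (F i) (fun σ => G i σ * h' σ) (hF i)
      (fun σ c => by rw [hG i σ c, hh σ c])

lemma gibbs_prod_zero' (E : Config N S → ℝ) (r : Fin n)
    {g h' : (Fin n → Config N S) → ℝ}
    (hg : Centered E r g) (hh : IndepOf r h') :
    gibbsAvg E (fun σ => h' σ * g σ) = 0 := by
  have : (fun σ => h' σ * g σ) = fun σ => g σ * h' σ := funext fun σ => mul_comm _ _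
  rw [this]; exact gibbs_prod_zero E r hg hh

lemma bAvg_mul_Z (β h D : ℝ) (ω : Disorder N) (i : Fin N) :
    bAvg N S β h D ω i * ∑ c : Config N S, Real.exp (Ham N S β h D ω c) =
    ∑ c : Config N S, spinVal S (c i) * Real.exp (Ham N S β h D ω c) := by
  unfold bAvg gibbsAvg
  rw [pow_one, div_mul_cancel₀ _ (Z_pos _).ne']
  rw [← Equiv.sum_comp (Equiv.funUnique (Fin 1) (Config N S)).symm]
  refine Finset.sum_congr rfl fun c _ => ?_
  simp [Equiv.funUnique]

lemma btAvg_mul_Z (β h D : ℝ) (ω : Disorder N) (i : Fin N) :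
    btAvg N S β h D ω i * ∑ c : Config N S, Real.exp (Ham N S β h D ω c) =
    ∑ c : Config N S, spinVal S (c i) ^ 2 * Real.exp (Ham N S β h D ω c) := by
  unfold btAvg gibbsAvg
  rw [pow_one, div_mul_cancel₀ _ (Z_pos _).ne']
  rw [← Equiv.sum_comp (Equiv.funUnique (Fin 1) (Config N S)).symm]
  refine Finset.sum_congr rfl fun c _ => ?_
  simp [Equiv.funUnique]

lemma sum_center_b (β h D : ℝ) (ω : Disorder N) (i : Fin N) :
    ∑ c : Config N S,
      (spinVal S (c i) - bAvg N S β h D ω i) * Real.exp (Ham N S β h D ω c) = 0 := by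
  simp_rw [sub_mul]
  rw [Finset.sum_sub_distrib, ← Finset.mul_sum, bAvg_mul_Z β h D ω i, sub_self]

lemma sum_center_bt (β h D : ℝ) (ω : Disorder N) (i : Fin N) :
    ∑ c : Config N S,
      (spinVal S (c i) ^ 2 - btAvg N S β h D ω i) * Real.exp (Ham N S β h D ω c) = 0 := by
  simp_rw [sub_mul]
  rw [Finset.sum_sub_distrib, ← Finset.mul_sum, btAvg_mul_Z β h D ω i, sub_self]

lemma Tkl_comm (β h D : ℝ) (ω : Disorder N) (σ : Fin n → Config N S) (k l : Fin n) :
    Tkl N S β h D ω σ k l = Tkl N S β h D ω σ l k := by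
  unfold Tkl
  congr 1
  exact Finset.sum_congr rfl fun i _ => by ring

lemma centered_Tkl_fst (β h D : ℝ) (ω : Disorder N) {k l : Fin n} (hkl : k ≠ l) :
    Centered (Ham N S β h D ω) k (fun σ => Tkl N S β h D ω σ k l) := by
  refine ⟨fun i c => (1 / (N : ℝ)) * (spinVal S (c i) - bAvg N S β h D ω i),
    fun i σ => spinVal S (σ l i) - bAvg N S β h D ω i, ?_, ?_, ?_⟩
  · intro σ; unfold Tkl; dsimp only; rw [Finset.mul_sum]
    exact Finset.sum_congr rfl fun i _ => by ring
  · intro i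
    simp_rw [mul_assoc]
    rw [← Finset.mul_sum, sum_center_b, mul_zero]
  · intro i σ c
    dsimp only
    rw [Function.update_of_ne (Ne.symm hkl)]

lemma centered_Tkl (β h D : ℝ) (ω : Disorder N) {k l r : Fin n} (hkl : k ≠ l)
    (hr : r = k ∨ r = l) :
    Centered (Ham N S β h D ω) r (fun σ => Tkl N S β h D ω σ k l) := by
  rcases hr with rfl | rfl
  · exact centered_Tkl_fst β h D ω hkl
  · have heq : (fun σ : Fin n → Config N S => Tkl N S β h D ω σ k r) =
        fun σ => Tkl N S β h D ω σ r k := funext fun σ => Tkl_comm β h D ω σ k r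
    rw [heq]
    exact centered_Tkl_fst β h D ω (Ne.symm hkl)

lemma centered_Tk (β h D : ℝ) (ω : Disorder N) (k : Fin n) :
    Centered (Ham N S β h D ω) k (fun σ => Tk N S β h D ω σ k) := by
  refine ⟨fun i c => (1 / (N : ℝ)) * (spinVal S (c i) - bAvg N S β h D ω i),
    fun i _ => bAvg N S β h D ω i, ?_, ?_, fun i σ c => rfl⟩
  · intro σ; unfold Tk; dsimp only; rw [Finset.mul_sum]
    exact Finset.sum_congr rfl fun i _ => by ring
  · intro i
    simp_rw [mul_assoc]
    rw [← Finset.mul_sum, sum_center_b, mul_zero]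

lemma centered_Sl (β h D : ℝ) (ω : Disorder N) (l : Fin n) :
    Centered (Ham N S β h D ω) l (fun σ => Sl N S β h D ω σ l) := by
  refine ⟨fun i c => (1 / (N : ℝ)) * (spinVal S (c i) ^ 2 - btAvg N S β h D ω i),
    fun i _ => 1, ?_, ?_, fun i σ c => rfl⟩
  · intro σ; unfold Sl; dsimp only; rw [Finset.mul_sum]
    exact Finset.sum_congr rfl fun i _ => by ring
  · intro i
    simp_rw [mul_assoc]
    rw [← Finset.mul_sum, sum_center_bt, mul_zero]

lemma indepOf_Tkl (β h D : ℝ) (ω : Disorder N) {r k l : Fin n} (hk : r ≠ k) (hl : r ≠ l) :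
    IndepOf r (fun σ => Tkl N S β h D ω σ k l) := by
  intro σ c
  unfold Tkl
  dsimp only
  congr 1
  refine Finset.sum_congr rfl fun i _ => ?_
  rw [Function.update_of_ne (Ne.symm hk), Function.update_of_ne (Ne.symm hl)]

lemma indepOf_Tk (β h D : ℝ) (ω : Disorder N) {r k : Fin n} (hk : r ≠ k) :
    IndepOf r (fun σ => Tk N S β h D ω σ k) := by
  intro σ c
  unfold Tk
  dsimp only
  congr 1
  refine Finset.sum_congr rfl fun i _ => ?_
  rw [Function.update_of_ne (Ne.symm hk)]

lemma indepOf_Sl (β h D : ℝ) (ω : Disorder N) {r l : Fin n} (hl : r ≠ l) :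
    IndepOf r (fun σ => Sl N S β h D ω σ l) := by
  intro σ c
  unfold Sl
  dsimp only
  congr 1
  refine Finset.sum_congr rfl fun i _ => ?_
  rw [Function.update_of_ne (Ne.symm hl)]

lemma indepOf_const (r : Fin n) (x : ℝ) :
    IndepOf (N := N) (S := S) r (fun _ => x) := fun _ _ => rfl

lemma pick_replica {k l k' l' : Fin n} (hkl : k < l) (hkl' : k' < l')
    (hne : (k, l) ≠ (k', l')) :
    ∃ r : Fin n, (r = k ∨ r = l) ∧ r ≠ k' ∧ r ≠ l' := by
  by_cases h1 : k = k'
  · subst h1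
    have hll' : l ≠ l' := by rintro rfl; exact hne rfl
    exact ⟨l, Or.inr rfl, hkl.ne', hll'⟩
  · by_cases h2 : k = l'
    · subst h2
      exact ⟨l, Or.inr rfl, (lt_trans hkl' hkl).ne', hkl.ne'⟩
    · exact ⟨k, Or.inl rfl, h1, h2⟩

lemma main_zero (β h D p q : ℝ) (ω : Disorder N) (u v : BasisIdx n)
    (huv : u ≠ v) (hcor : ¬ CorrelatedPair u v) :
    gibbsAvg (Ham N S β h D ω)
      (fun σ => basisRV N S β h D p q u ω σ * basisRV N S β h D p q v ω σ) = 0 := by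
  rcases u with ⟨⟨k, l⟩, hkl⟩ | k | m | ⟨⟩ | ⟨⟩ <;>
    rcases v with ⟨⟨k', l'⟩, hkl'⟩ | k'' | m'' | ⟨⟩ | ⟨⟩ <;>
    simp only [basisRV]
  -- Tkl vs Tkl
  · have hne : (k, l) ≠ (k', l') := fun hpq => huv (congrArg Sum.inl (Subtype.ext hpq))
    obtain ⟨r, hr, hr1, hr2⟩ := pick_replica hkl hkl' hne
    exact gibbs_prod_zero _ r (centered_Tkl β h D ω hkl.ne hr)
      (indepOf_Tkl β h D ω hr1 hr2)
  -- Tkl vs Tk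
  · rcases eq_or_ne k'' k with rfl | hmk
    · exact gibbs_prod_zero _ l (centered_Tkl β h D ω hkl.ne (Or.inr rfl))
        (indepOf_Tk β h D ω hkl.ne')
    · exact gibbs_prod_zero _ k (centered_Tkl β h D ω hkl.ne (Or.inl rfl))
        (indepOf_Tk β h D ω hmk.symm)
  -- Tkl vs Sl
  · rcases eq_or_ne m'' k with rfl | hmk
    · exact gibbs_prod_zero _ l (centered_Tkl β h D ω hkl.ne (Or.inr rfl))
        (indepOf_Sl β h D ω hkl.ne')
    · exact gibbs_prod_zero _ k (centered_Tkl β h D ω hkl.ne (Or.inl rfl))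
        (indepOf_Sl β h D ω hmk.symm)
  -- Tkl vs T
  · exact gibbs_prod_zero _ k (centered_Tkl β h D ω hkl.ne (Or.inl rfl))
      (indepOf_const k _)
  -- Tkl vs S
  · exact gibbs_prod_zero _ k (centered_Tkl β h D ω hkl.ne (Or.inl rfl))
      (indepOf_const k _)
  -- Tk vs Tkl
  · rcases eq_or_ne k k' with rfl | hmk
    · exact gibbs_prod_zero' _ l' (centered_Tkl β h D ω hkl'.ne (Or.inr rfl))
        (indepOf_Tk β h D ω hkl'.ne')
    · exact gibbs_prod_zero' _ k' (centered_Tkl β h D ω hkl'.ne (Or.inl rfl))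
        (indepOf_Tk β h D ω hmk.symm)
  -- Tk vs Tk
  · have hkm : k ≠ k'' := fun hh => huv (by rw [hh])
    exact gibbs_prod_zero _ k (centered_Tk β h D ω k) (indepOf_Tk β h D ω hkm)
  -- Tk vs Sl
  · have hkm : k ≠ m'' := by
      rintro rfl
      exact hcor (Or.inl ⟨k, Or.inl ⟨rfl, rfl⟩⟩)
    exact gibbs_prod_zero _ k (centered_Tk β h D ω k) (indepOf_Sl β h D ω hkm)
  -- Tk vs T
  · exact gibbs_prod_zero _ k (centered_Tk β h D ω k) (indepOf_const k _)
  -- Tk vs S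
  · exact gibbs_prod_zero _ k (centered_Tk β h D ω k) (indepOf_const k _)
  -- Sl vs Tkl
  · rcases eq_or_ne m k' with rfl | hmk
    · exact gibbs_prod_zero' _ l' (centered_Tkl β h D ω hkl'.ne (Or.inr rfl))
        (indepOf_Sl β h D ω hkl'.ne')
    · exact gibbs_prod_zero' _ k' (centered_Tkl β h D ω hkl'.ne (Or.inl rfl))
        (indepOf_Sl β h D ω hmk.symm)
  -- Sl vs Tk
  · have hkm : k'' ≠ m := by
      rintro rfl
      exact hcor (Or.inl ⟨k'', Or.inr ⟨rfl, rfl⟩⟩)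
    exact gibbs_prod_zero' _ k'' (centered_Tk β h D ω k'') (indepOf_Sl β h D ω hkm)
  -- Sl vs Sl
  · have hkm : m ≠ m'' := fun hh => huv (by rw [hh])
    exact gibbs_prod_zero _ m (centered_Sl β h D ω m) (indepOf_Sl β h D ω hkm)
  -- Sl vs T
  · exact gibbs_prod_zero _ m (centered_Sl β h D ω m) (indepOf_const m _)
  -- Sl vs S
  · exact gibbs_prod_zero _ m (centered_Sl β h D ω m) (indepOf_const m _)
  -- T vs Tkl
  · exact gibbs_prod_zero' _ k' (centered_Tkl β h D ω hkl'.ne (Or.inl rfl))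
      (indepOf_const k' _)
  -- T vs Tk
  · exact gibbs_prod_zero' _ k'' (centered_Tk β h D ω k'') (indepOf_const k'' _)
  -- T vs Sl
  · exact gibbs_prod_zero' _ m'' (centered_Sl β h D ω m'') (indepOf_const m'' _)
  -- T vs T
  · exact absurd rfl huv
  -- T vs S
  · exact absurd (Or.inr (Or.inl ⟨rfl, rfl⟩)) hcor
  -- S vs Tkl
  · exact gibbs_prod_zero' _ k' (centered_Tkl β h D ω hkl'.ne (Or.inl rfl))
      (indepOf_const k' _)
  -- S vs Tk
  · exact gibbs_prod_zero' _ k'' (centered_Tk β h D ω k'') (indepOf_const k'' _)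
  -- S vs Sl
  · exact gibbs_prod_zero' _ m'' (centered_Sl β h D ω m'') (indepOf_const m'' _)
  -- S vs T
  · exact absurd (Or.inr (Or.inr ⟨rfl, rfl⟩)) hcor
  -- S vs S
  · exact absurd rfl huv

end AuxProofs

/-- pairwise independence of the basis random variables. -/
theorem statement_3 (N S n : ℕ) (hN : 2 ≤ N) (hS : 1 ≤ S) (hn : 1 ≤ n)
    (β h D : ℝ) (hβ : 0 < β) (hh : 0 ≤ h) (p q : ℝ)
    (u v : BasisIdx n) (huv : u ≠ v) (hcor : ¬ CorrelatedPair u v) :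
    nu N S n β h D (fun ω σ =>
      basisRV N S β h D p q u ω σ * basisRV N S β h D p q v ω σ) = 0 := by
  unfold nu
  have hz : ∀ ω : Disorder N, gibbsAvg (Ham N S β h D ω)
      (fun σ => basisRV N S β h D p q u ω σ * basisRV N S β h D p q v ω σ) = 0 :=
    fun ω => main_zero β h D p q ω u v huv hcor
  simp only [hz, integral_zero]

end GS
end

section
/- Let p, q ∈ ℝ and consider ν₀-averages of a system of n replicas. Let v₁, v₂, v₃ ∈ {1, …, n} be distinct and set either ε(v) = ε_{v₁}ε_{v₃} − ε_{v₂}ε_{v₃} or ε(v) = ε_{v₁}² − ε_{v₂}². Then: (i) for any replica indices a, b ∈ {1, …, n} (possibly equal) with |{a, b} ∩ {v₁, v₂}| ≠ 1, ν₀(ε(v)·ε_a ε_b) = 0; (ii) for any replica index k ∈ {1, …, n} with k ∉ {v₁, v₂}, ν₀(ε(v)·ε_{v₁}ε_k) = −ν₀(ε(v)·ε_{v₂}ε_k). -/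
open MeasureTheory ProbabilityTheory Finset

namespace GS

private lemma gibbsAvg_perm {N S n : ℕ} (E : Config N S → ℝ) (π : Equiv.Perm (Fin n))
    (f : (Fin n → Config N S) → ℝ) :
    gibbsAvg E (fun σ => f (σ ∘ π)) = gibbsAvg E f := by
  unfold gibbsAvg
  congr 1
  let e : (Fin n → Config N S) ≃ (Fin n → Config N S) :=
    { toFun := fun σ => σ ∘ π
      invFun := fun σ => σ ∘ π.symm
      left_inv := fun σ => by funext i; simp
      right_inv := fun σ => by funext i; simp }
  calc ∑ σ : Fin n → Config N S, f (σ ∘ ⇑π) * ∏ k, Real.exp (E (σ k))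
      = ∑ σ : Fin n → Config N S, f (e σ) * ∏ k, Real.exp (E ((e σ) k)) := by
        refine Finset.sum_congr rfl fun σ _ => ?_
        congr 1
        exact (Equiv.prod_comp π (fun k => Real.exp (E (σ k)))).symm
    _ = ∑ σ : Fin n → Config N S, f σ * ∏ k, Real.exp (E (σ k)) :=
        Equiv.sum_comp e (fun τ => f τ * ∏ k, Real.exp (E (τ k)))

private lemma gibbsAvg_neg {N S n : ℕ} (E : Config N S → ℝ)
    (f : (Fin n → Config N S) → ℝ) :
    gibbsAvg E (fun σ => -(f σ)) = - gibbsAvg E f := by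
  unfold gibbsAvg
  rw [← neg_div]
  congr 1
  simp [neg_mul]

private lemma nu0_perm (N S n : ℕ) (β h D p q : ℝ) (π : Equiv.Perm (Fin n))
    (f : (Fin n → Config N S) → ℝ) :
    nu0 N S n β h D p q (fun _ σ => f (σ ∘ π)) = nu0 N S n β h D p q (fun _ σ => f σ) := by
  unfold nu0 nuT
  congr 1
  funext ω
  exact gibbsAvg_perm _ π f

private lemma nu0_neg (N S n : ℕ) (β h D p q : ℝ)
    (f : (Fin n → Config N S) → ℝ) :
    nu0 N S n β h D p q (fun _ σ => -(f σ)) = - nu0 N S n β h D p q (fun _ σ => f σ) := by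
  unfold nu0 nuT
  rw [← MeasureTheory.integral_neg]
  congr 1
  funext ω
  exact gibbsAvg_neg _ f

/-- symmetry identities for `ν₀`-averages of last-spin expressions. -/
theorem statement_19 (N S n : ℕ) (hN : 2 ≤ N) (hS : 1 ≤ S) (hn : 4 ≤ n)
    (β h D : ℝ) (hβ : 0 < β) (hh : 0 ≤ h) (p q : ℝ)
    (v₁ v₂ v₃ : Fin n) (h12 : v₁ ≠ v₂) (h13 : v₁ ≠ v₃) (h23 : v₂ ≠ v₃)
    (εv : (Fin n → Config N S) → ℝ)
    (hεv : (εv = fun σ =>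
        lastSpin N S (σ v₁) * lastSpin N S (σ v₃) -
          lastSpin N S (σ v₂) * lastSpin N S (σ v₃)) ∨
      (εv = fun σ => lastSpin N S (σ v₁) ^ 2 - lastSpin N S (σ v₂) ^ 2)) :
    (∀ a b : Fin n, (({a, b} : Finset (Fin n)) ∩ ({v₁, v₂} : Finset (Fin n))).card ≠ 1 →
      nu0 N S n β h D p q (fun _ σ =>
        εv σ * (lastSpin N S (σ a) * lastSpin N S (σ b))) = 0) ∧
    (∀ k : Fin n, k ≠ v₁ → k ≠ v₂ →
      nu0 N S n β h D p q (fun _ σ =>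
          εv σ * (lastSpin N S (σ v₁) * lastSpin N S (σ k))) =
        - nu0 N S n β h D p q (fun _ σ =>
          εv σ * (lastSpin N S (σ v₂) * lastSpin N S (σ k)))) := by
  set π : Equiv.Perm (Fin n) := Equiv.swap v₁ v₂ with hπ
  have hπ1 : π v₁ = v₂ := Equiv.swap_apply_left _ _
  have hπ2 : π v₂ = v₁ := Equiv.swap_apply_right _ _
  have hπ3 : π v₃ = v₃ := Equiv.swap_apply_of_ne_of_ne h13.symm h23.symm
  have hεswap : ∀ σ : Fin n → Config N S, εv (σ ∘ π) = - εv σ := by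
    intro σ
    rcases hεv with hf | hf <;>
      simp only [hf, Function.comp_apply, hπ1, hπ2, hπ3] <;> ring
  constructor
  · intro a b hcard
    have hiff : (v₁ ∈ ({a, b} : Finset (Fin n))) ↔ (v₂ ∈ ({a, b} : Finset (Fin n))) := by
      constructor
      · intro h1
        by_contra h2
        apply hcard
        have h2' : ¬(v₂ = a ∨ v₂ = b) := by simpa using h2
        have h1' : v₁ = a ∨ v₁ = b := by simpa using h1
        have : ({a, b} : Finset (Fin n)) ∩ {v₁, v₂} = {v₁} := by
          ext x
          simp only [Finset.mem_inter, Finset.mem_insert, Finset.mem_singleton]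
          constructor
          · rintro ⟨hx, rfl | rfl⟩
            · rfl
            · exact absurd hx h2'
          · rintro rfl
            exact ⟨h1', Or.inl rfl⟩
        rw [this, Finset.card_singleton]
      · intro h2
        by_contra h1
        apply hcard
        have h1' : ¬(v₁ = a ∨ v₁ = b) := by simpa using h1
        have h2' : v₂ = a ∨ v₂ = b := by simpa using h2
        have : ({a, b} : Finset (Fin n)) ∩ {v₁, v₂} = {v₂} := by
          ext x
          simp only [Finset.mem_inter, Finset.mem_insert, Finset.mem_singleton]
          constructor
          · rintro ⟨hx, rfl | rfl⟩
            · exact absurd hx h1'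
            · rfl
          · rintro rfl
            exact ⟨h2', Or.inr rfl⟩
        rw [this, Finset.card_singleton]
    have hab : ∀ σ : Fin n → Config N S,
        lastSpin N S (σ (π a)) * lastSpin N S (σ (π b)) =
          lastSpin N S (σ a) * lastSpin N S (σ b) := by
      intro σ
      by_cases hv1 : v₁ ∈ ({a, b} : Finset (Fin n))
      · have hv2 := hiff.mp hv1
        have h1' : v₁ = a ∨ v₁ = b := by simpa using hv1
        have h2' : v₂ = a ∨ v₂ = b := by simpa using hv2
        rcases h1' with h1 | h1 <;> rcases h2' with h2 | h2
        · exact absurd (h1.trans h2.symm) h12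
        · rw [← h1, ← h2, hπ1, hπ2, mul_comm]
        · rw [← h1, ← h2, hπ1, hπ2, mul_comm]
        · exact absurd (h1.trans h2.symm) h12
      · have hv2 : v₂ ∉ ({a, b} : Finset (Fin n)) := fun hh => hv1 (hiff.mpr hh)
        have h1' : ¬(v₁ = a ∨ v₁ = b) := by simpa using hv1
        have h2' : ¬(v₂ = a ∨ v₂ = b) := by simpa using hv2
        push_neg at h1' h2'
        rw [Equiv.swap_apply_of_ne_of_ne (fun hh => h1'.1 hh.symm) (fun hh => h2'.1 hh.symm),
          Equiv.swap_apply_of_ne_of_ne (fun hh => h1'.2 hh.symm) (fun hh => h2'.2 hh.symm)]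
    have step2 : (fun (_ : Disorder N) (σ : Fin n → Config N S) =>
        εv (σ ∘ π) * (lastSpin N S ((σ ∘ π) a) * lastSpin N S ((σ ∘ π) b))) =
        (fun _ σ => -(εv σ * (lastSpin N S (σ a) * lastSpin N S (σ b)))) := by
      funext ω σ
      simp only [Function.comp_apply]
      rw [hεswap σ, hab σ]
      ring
    have hkey : nu0 N S n β h D p q
        (fun _ σ => εv σ * (lastSpin N S (σ a) * lastSpin N S (σ b))) =
        - nu0 N S n β h D p q
          (fun _ σ => εv σ * (lastSpin N S (σ a) * lastSpin N S (σ b))) := by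
      calc nu0 N S n β h D p q
            (fun _ σ => εv σ * (lastSpin N S (σ a) * lastSpin N S (σ b)))
          = nu0 N S n β h D p q (fun _ σ =>
              εv (σ ∘ π) * (lastSpin N S ((σ ∘ π) a) * lastSpin N S ((σ ∘ π) b))) :=
            (nu0_perm N S n β h D p q π
              (fun σ => εv σ * (lastSpin N S (σ a) * lastSpin N S (σ b)))).symm
        _ = nu0 N S n β h D p q
              (fun _ σ => -(εv σ * (lastSpin N S (σ a) * lastSpin N S (σ b)))) :=
            congrArg _ step2
        _ = - nu0 N S n β h D p q
              (fun _ σ => εv σ * (lastSpin N S (σ a) * lastSpin N S (σ b))) :=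
            nu0_neg N S n β h D p q _
    linarith
  · intro k hk1 hk2
    have hπk : π k = k := Equiv.swap_apply_of_ne_of_ne hk1 hk2
    have step2 : (fun (_ : Disorder N) (σ : Fin n → Config N S) =>
        εv (σ ∘ π) * (lastSpin N S ((σ ∘ π) v₁) * lastSpin N S ((σ ∘ π) k))) =
        (fun _ σ => -(εv σ * (lastSpin N S (σ v₂) * lastSpin N S (σ k)))) := by
      funext ω σ
      simp only [Function.comp_apply, hπ1, hπk]
      rw [hεswap σ]
      ring
    calc nu0 N S n β h D p q
          (fun _ σ => εv σ * (lastSpin N S (σ v₁) * lastSpin N S (σ k)))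
        = nu0 N S n β h D p q (fun _ σ =>
            εv (σ ∘ π) * (lastSpin N S ((σ ∘ π) v₁) * lastSpin N S ((σ ∘ π) k))) :=
          (nu0_perm N S n β h D p q π
            (fun σ => εv σ * (lastSpin N S (σ v₁) * lastSpin N S (σ k)))).symm
      _ = nu0 N S n β h D p q
            (fun _ σ => -(εv σ * (lastSpin N S (σ v₂) * lastSpin N S (σ k)))) :=
          congrArg _ step2
      _ = - nu0 N S n β h D p q
            (fun _ σ => εv σ * (lastSpin N S (σ v₂) * lastSpin N S (σ k))) :=
          nu0_neg N S n β h D p q _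

end GS
end
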